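/- For a formal power series a ∈ ℂ⟦X⟧ the following are equivalent: (i) there exists b ∈ ℂ⟦X⟧ with a = b̄ · b, where b̄ denotes the coefficientwise complex conjugate of b; (ii) all coefficients of a are real, and either a = 0 or, with n₀ the least index such that the coefficient a_{n₀} is nonzero, n₀ is even and a_{n₀} > 0. -/

import Mathlib

open PowerSeries

noncomputable def sqSeq (u : ℕ → ℝ) : ℕ → ℝ
  | 0 => Real.sqrt (u 0)
  | (n+1) => (u (n+1) - ∑ i ∈ (Finset.Ico 1 (n+1)).attach,
      sqSeq u i.1 * sqSeq u (n+1-i.1)) / (2 * Real.sqrt (u 0))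
  decreasing_by
  · have := Finset.mem_Ico.mp i.2; omega
  · have := Finset.mem_Ico.mp i.2; omega

lemma sqSeq_spec (u : ℕ → ℝ) (hu : 0 < u 0) (n : ℕ) :
    ∑ i ∈ Finset.range (n+1), sqSeq u i * sqSeq u (n - i) = u n := by
  have h0 : sqSeq u 0 = Real.sqrt (u 0) := by rw [sqSeq]
  have hs : (0:ℝ) < Real.sqrt (u 0) := Real.sqrt_pos.mpr hu
  cases n with
  | zero => simp [h0, Real.mul_self_sqrt hu.le]
  | succ n =>
    have hdef : sqSeq u (n+1) * (2 * Real.sqrt (u 0)) =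
        u (n+1) - ∑ i ∈ Finset.Ico 1 (n+1), sqSeq u i * sqSeq u (n+1-i) := by
      conv_lhs => rw [sqSeq]
      rw [div_mul_cancel₀ _ (by positivity : (2 * Real.sqrt (u 0)) ≠ 0),
        Finset.sum_attach (Finset.Ico 1 (n+1)) (fun j => sqSeq u j * sqSeq u (n+1-j))]
    rw [Finset.sum_range_succ, Finset.sum_range_succ']
    have hIco : ∑ i ∈ Finset.range n, sqSeq u (i+1) * sqSeq u (n+1 - (i+1)) =
        ∑ i ∈ Finset.Ico 1 (n+1), sqSeq u i * sqSeq u (n+1-i) := by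
      rw [Finset.sum_Ico_eq_sum_range]
      simp only [Nat.add_sub_cancel]
      exact Finset.sum_congr rfl fun i _ => by rw [add_comm 1 i]
    have : ∀ i ∈ Finset.range n, sqSeq u (i+1) * sqSeq u (n + 1 - (i+1)) =
        sqSeq u (i+1) * sqSeq u (n+1 - (i+1)) := fun i _ => rfl
    rw [Finset.sum_congr rfl this, hIco]
    simp only [Nat.sub_self, Nat.add_sub_cancel_left, Nat.add_sub_cancel, Nat.sub_zero]
    rw [h0]
    linear_combination hdef

lemma sqSeq_mul (u : ℕ → ℝ) (hu : 0 < u 0) (n : ℕ) :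
    (PowerSeries.coeff n) (PowerSeries.mk (sqSeq u) * PowerSeries.mk (sqSeq u)) = u n := by
  rw [PowerSeries.coeff_mul, Finset.Nat.sum_antidiagonal_eq_sum_range_succ_mk]
  simpa using sqSeq_spec u hu n

/-- nonnegativity of formal power series, Duch Def. 5.3.
For `a ∈ ℂ⟦X⟧` the following are equivalent:
(i) `a = b̄ ⬝ b` for some `b ∈ ℂ⟦X⟧` (coefficientwise conjugate);
(ii) all coefficients of `a` are real and either `a = 0` or the first nonzero
coefficient has even index and is positive. -/
theorem stmt17 (a : PowerSeries ℂ) :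
    (∃ b : PowerSeries ℂ, a = (PowerSeries.map (starRingEnd ℂ) b) * b) ↔
      ((∀ n : ℕ, (PowerSeries.coeff n a).im = 0) ∧
        (a = 0 ∨ ∃ n₀ : ℕ,
          PowerSeries.coeff n₀ a ≠ 0 ∧
          (∀ m : ℕ, m < n₀ → PowerSeries.coeff m a = 0) ∧
          Even n₀ ∧ 0 < (PowerSeries.coeff n₀ a).re)) := by
  constructor
  · rintro ⟨b, rfl⟩
    have hc : ∀ n, (PowerSeries.coeff n) (PowerSeries.map (starRingEnd ℂ) b * b) =
        ∑ i ∈ Finset.range (n+1),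
          (starRingEnd ℂ) (PowerSeries.coeff i b) * PowerSeries.coeff (n - i) b := by
      intro n
      rw [PowerSeries.coeff_mul, Finset.Nat.sum_antidiagonal_eq_sum_range_succ_mk]
      simp [PowerSeries.coeff_map]
    constructor
    · intro n
      rw [← Complex.conj_eq_iff_im, hc, map_sum]
      rw [← Finset.sum_range_reflect]
      refine Finset.sum_congr rfl fun i hi => ?_
      have hi' : i ≤ n := by simpa using Nat.lt_succ_iff.mp (Finset.mem_range.mp hi)
      have : n - (n - i) = i := by omega
      simp [this, mul_comm]
    · by_cases hb : b = 0
      · left; simp [hb]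
      · right
        obtain ⟨k, hk, hmin⟩ : ∃ k, PowerSeries.coeff k b ≠ 0 ∧
            ∀ m < k, PowerSeries.coeff m b = 0 := by
          have hex : ∃ n, PowerSeries.coeff n b ≠ 0 := by
            by_contra h
            push_neg at h
            exact hb (PowerSeries.ext fun n => by simp [h n])
          exact ⟨Nat.find hex, Nat.find_spec hex,
            fun m hm => by simpa using Nat.find_min hex hm⟩
        refine ⟨k + k, ?_, ?_, ⟨k, rfl⟩, ?_⟩
        all_goals
          have hkk : (PowerSeries.coeff (k+k)) (PowerSeries.map (starRingEnd ℂ) b * b) =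
              (Complex.normSq (PowerSeries.coeff k b) : ℂ) := by
            rw [PowerSeries.coeff_mul]
            rw [Finset.sum_eq_single (k, k)]
            · rw [PowerSeries.coeff_map, ← Complex.normSq_eq_conj_mul_self]
            · rintro ⟨i, j⟩ hmem hne
              have hij : i + j = k + k := Finset.HasAntidiagonal.mem_antidiagonal.mp hmem
              rcases lt_or_ge i k with h | h
              · simp [PowerSeries.coeff_map, hmin i h]
              · have : j < k := by
                  rcases lt_or_eq_of_le h with h' | h'
                  · omega
                  · exact absurd (by simp [← h']; omega : (i, j) = (k, k)) hne
                simp [hmin j this]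
            · intro h
              simp at h
        · rw [hkk]
          simpa [Complex.ext_iff] using Complex.normSq_pos.mpr hk |>.ne'
        · intro m hm
          rw [PowerSeries.coeff_mul]
          refine Finset.sum_eq_zero fun ⟨i, j⟩ hmem => ?_
          have hij : i + j = m := Finset.HasAntidiagonal.mem_antidiagonal.mp hmem
          rcases (by omega : i < k ∨ j < k) with h | h
          · simp [PowerSeries.coeff_map, hmin i h]
          · simp [hmin j h]
        · rw [hkk]
          simpa using Complex.normSq_pos.mpr hk
  · rintro ⟨him, h0 | ⟨n₀, hne, hmin, ⟨k, hk⟩, hpos⟩⟩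
    · exact ⟨0, by simp [h0]⟩
    · set u : ℕ → ℝ := fun n => (PowerSeries.coeff (n₀ + n) a).re with hu
      have hu0 : 0 < u 0 := by simpa [hu] using hpos
      set f : PowerSeries ℝ := PowerSeries.mk (sqSeq u) with hf
      set g : PowerSeries ℂ := PowerSeries.map Complex.ofRealHom f with hg
      refine ⟨g * X ^ k, ?_⟩
      have hg' : PowerSeries.map (starRingEnd ℂ) g = g := by
        ext n
        simp [hg, PowerSeries.coeff_map, Complex.conj_ofReal]
      have hconj : PowerSeries.map (starRingEnd ℂ) (g * X ^ k) = g * X ^ k := by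
        rw [map_mul, map_pow, PowerSeries.map_X, hg']
      rw [hconj]
      have key : g * X ^ k * (g * X ^ k) = PowerSeries.map Complex.ofRealHom (f * f) * X ^ n₀ := by
        rw [map_mul]; ring_nf
        rw [hk, pow_add]; ring
      rw [key]
      ext n
      rw [PowerSeries.coeff_mul_X_pow']
      split_ifs with h
      · rw [PowerSeries.coeff_map, sqSeq_mul u hu0]
        have hn : n₀ + (n - n₀) = n := by omega
        rw [hu]
        simp only [hn]
        exact Complex.ext rfl (by simp [him n])
      · exact hmin n (by omega)
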